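/- arXiv:1410.8471 — 5 statements merged into one kernel-verified Lean document; each statement's English description precedes it below -/
import Mathlib

section
/- Let δ > 0 and k > 1 a real number. Suppose F : (0, δ) → ℝ is continuously differentiable with ∫₀^δ r^k (F(r)² + F'(r)²) dr < ∞. Then ∫₀^δ r^{k-2} F(r)² dr ≤ C(δ,k) ∫₀^δ r^k (F(r)² + F'(r)²) dr for a constant C(δ,k) depending only on δ and k. -/
open Real MeasureTheory

/-- Pointwise AM-GM step for the Hardy inequality. -/
lemma hardy_ptwise_aux (k r A B : ℝ) (hk : 1 < k) (hr : 0 < r) :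
    ((k-1)/2) * (r ^ (k-2) * A^2) - (2/(k-1)) * (r ^ k * B^2) ≤
      (k-1) * r ^ (k-2) * A^2 + r ^ (k-1) * (2 * A * B) := by
  have hc : (0:ℝ) < k - 1 := by linarith
  set P := r ^ (k-2) with hPdef
  set Q := r ^ (k-1) with hQdef
  set R := r ^ k with hRdef
  have hQ2 : Q^2 = P * R := by
    rw [hPdef, hQdef, hRdef, ← Real.rpow_natCast (r ^ (k-1)) 2, ← Real.rpow_mul hr.le,
      ← Real.rpow_add hr]
    norm_num
    ring_nf
  have hR : 0 < R := Real.rpow_pos_of_pos hr _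
  set d := 2/(k-1) with hddef
  have hd : d * (k-1) = 2 := by rw [hddef]; field_simp
  have key : 0 ≤ ((k-1)/2) * (P*A^2) + 2*Q*A*B + d*(R*B^2) := by
    have hcR : 0 < 2*(k-1)*R := by positivity
    refine le_of_mul_le_mul_left ?_ hcR
    have heq : 2*(k-1)*R * (((k-1)/2) * (P*A^2) + 2*Q*A*B + d*(R*B^2)) =
        ((k-1)*Q*A + 2*R*B)^2 := by
      linear_combination (-((k-1)^2*A^2)) * hQ2 + (2*R^2*B^2) * hd
    rw [mul_zero, heq]
    exact sq_nonneg _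
  nlinarith [key]

set_option maxHeartbeats 1000000 in
/-- Weighted Hardy inequality on `(0, δ)` with power weight `r^k`, `k > 1`:
`∫₀^δ r^{k-2} F² dr ≤ C(δ,k) ∫₀^δ r^k (F² + F'²) dr`. -/
theorem hardy_inequality_power_weight (δ k : ℝ) (hδ : 0 < δ) (hk : 1 < k) :
    ∃ C > 0, ∀ F F' : ℝ → ℝ,
      (∀ r ∈ Set.Ioo (0 : ℝ) δ, HasDerivAt F (F' r) r) →
      ContinuousOn F' (Set.Ioo (0 : ℝ) δ) →
      IntegrableOn (fun r => r ^ k * (F r ^ 2 + F' r ^ 2)) (Set.Ioo (0 : ℝ) δ) →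
      (∫ r in Set.Ioo (0 : ℝ) δ, r ^ (k - 2) * F r ^ 2) ≤
        C * ∫ r in Set.Ioo (0 : ℝ) δ, r ^ k * (F r ^ 2 + F' r ^ 2) := by
  have hk1 : (0:ℝ) < k - 1 := by linarith
  set c₁ : ℝ := 2 / (δ/2) ^ (k+1) with hc₁def
  have hδ2 : (0:ℝ) < δ/2 := by linarith
  have hc₁pos : 0 < c₁ := by
    rw [hc₁def]
    positivity
  refine ⟨(2/(k-1)) * (δ ^ (k-1) * c₁ + 2/(k-1)) + (2/δ)^2, by positivity, ?_⟩
  intro F F' hF hF' hInt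
  set bigI := fun r : ℝ => r ^ k * (F r ^ 2 + F' r ^ 2) with hbigIdef
  set I := ∫ r in Set.Ioo (0:ℝ) δ, bigI r with hIdef
  have hFcont : ContinuousOn F (Set.Ioo 0 δ) :=
    fun r hr => (hF r hr).continuousAt.continuousWithinAt
  have hbig_nonneg : ∀ r ∈ Set.Ioo (0:ℝ) δ, 0 ≤ bigI r := by
    intro r hr
    have h1 : (0:ℝ) ≤ r ^ k := (Real.rpow_pos_of_pos hr.1 _).le
    have h2 : (0:ℝ) ≤ F r ^ 2 + F' r ^ 2 := by positivity
    exact mul_nonneg h1 h2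
  have hI0 : 0 ≤ I := setIntegral_nonneg measurableSet_Ioo hbig_nonneg
  have hsub2 : Set.Ioo (δ/2) δ ⊆ Set.Ioo (0:ℝ) δ :=
    fun x hx => ⟨lt_trans hδ2 hx.1, hx.2⟩
  -- Step 1: find a good point b near δ where F b is controlled.
  obtain ⟨b, hb, hFb⟩ : ∃ b ∈ Set.Ioo (δ/2) δ, F b ^ 2 ≤ c₁ * I := by
    by_contra hcon
    push_neg at hcon
    have hpt : ∀ r ∈ Set.Ioo (δ/2) δ, (δ/2) ^ k * (c₁ * I) ≤ bigI r := by
      intro r hr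
      have h1 : (δ/2) ^ k ≤ r ^ k := Real.rpow_le_rpow hδ2.le hr.1.le (by linarith)
      have h2 : c₁ * I ≤ F r ^ 2 + F' r ^ 2 := by
        have := hcon r hr
        nlinarith [sq_nonneg (F' r)]
      have h3 : 0 ≤ c₁ * I := mul_nonneg hc₁pos.le hI0
      calc (δ/2) ^ k * (c₁ * I) ≤ r ^ k * (c₁ * I) := by
            apply mul_le_mul_of_nonneg_right h1 h3
        _ ≤ r ^ k * (F r ^ 2 + F' r ^ 2) := by
            apply mul_le_mul_of_nonneg_left h2 (le_trans (Real.rpow_pos_of_pos hδ2 k).le h1)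
    have hIle : ∫ r in Set.Ioo (δ/2) δ, bigI r ≤ I := by
      apply setIntegral_mono_set hInt
      · exact (ae_restrict_of_forall_mem measurableSet_Ioo hbig_nonneg)
      · exact HasSubset.Subset.eventuallyLE hsub2
    have hge : ((δ/2) ^ k * (c₁ * I)) * (volume (Set.Ioo (δ/2) δ)).toReal ≤
        ∫ r in Set.Ioo (δ/2) δ, bigI r := by
      apply setIntegral_ge_of_const_le_real measurableSet_Ioo
      · rw [Real.volume_Ioo]; exact ENNReal.ofReal_ne_top
      · exact hpt
      · exact hInt.mono_set hsub2
    have hvol : (volume (Set.Ioo (δ/2) δ)).toReal = δ/2 := by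
      rw [Real.volume_Ioo, ENNReal.toReal_ofReal (by linarith)]
      ring
    rw [hvol] at hge
    have hpow : (δ/2) ^ k * (δ/2) = (δ/2) ^ (k+1) := by
      rw [Real.rpow_add_one hδ2.ne']
    have hc₁eq : c₁ * (δ/2) ^ (k+1) = 2 := by
      rw [hc₁def]; field_simp
    have h2I : 2 * I ≤ I := by
      calc 2 * I = ((δ/2) ^ k * (c₁ * I)) * (δ/2) := by
            linear_combination (-(c₁*I)) * hpow - I * hc₁eq
        _ ≤ ∫ r in Set.Ioo (δ/2) δ, bigI r := hge
        _ ≤ I := hIle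
    have hIzero : I = 0 := by linarith
    have hae : ∀ᵐ x ∂(volume.restrict (Set.Ioo (0:ℝ) δ)), bigI x = 0 := by
      have := (integral_eq_zero_iff_of_nonneg_ae
        (ae_restrict_of_forall_mem measurableSet_Ioo hbig_nonneg) hInt).mp hIzero
      filter_upwards [this] with x hx using hx
    rw [ae_restrict_iff' measurableSet_Ioo] at hae
    rw [MeasureTheory.ae_iff] at hae
    have hne : ¬ Set.Ioo (δ/2) δ ⊆ {a | ¬(a ∈ Set.Ioo (0:ℝ) δ → bigI a = 0)} := by
      intro hsubS
      have := measure_mono hsubS (μ := volume)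
      rw [hae, Real.volume_Ioo] at this
      simp only [nonpos_iff_eq_zero, ENNReal.ofReal_eq_zero] at this
      linarith
    rw [Set.not_subset] at hne
    obtain ⟨x, hx, hxg⟩ := hne
    simp only [Set.mem_setOf_eq, not_not] at hxg
    have hbig0 : bigI x = 0 := hxg (hsub2 hx)
    have hxk : 0 < x ^ k := Real.rpow_pos_of_pos ((hsub2 hx).1) k
    have hF0 : F x ^ 2 = 0 := by
      rw [hbigIdef] at hbig0
      simp only at hbig0
      nlinarith [sq_nonneg (F x), sq_nonneg (F' x)]
    have := hcon x hx
    rw [hF0, hIzero] at this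
    simp at this
  have hb0 : 0 < b := lt_trans hδ2 hb.1
  have hbδ : b ∈ Set.Ioo (0:ℝ) δ := ⟨hb0, hb.2⟩
  set g := fun r : ℝ => r ^ (k-2) * F r ^ 2 with hgdef
  have hg_cont : ContinuousOn g (Set.Ioo 0 δ) :=
    (continuousOn_id.rpow_const (fun x hx => Or.inl (ne_of_gt hx.1))).mul (hFcont.pow 2)
  have hg_nonneg : ∀ r ∈ Set.Ioo (0:ℝ) δ, 0 ≤ g r := by
    intro r hr
    have := (Real.rpow_pos_of_pos hr.1 (k-2)).le
    exact mul_nonneg this (sq_nonneg _)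
  -- Step 2: the core integration-by-parts bound on every interval `(a, b]`.
  have key : ∀ a ∈ Set.Ioo (0:ℝ) b, ∫ r in Set.Ioc a b, g r ≤
      (2/(k-1)) * (δ ^ (k-1) * (c₁ * I) + (2/(k-1)) * I) := by
    intro a ha
    have hab : a < b := ha.2
    have ha0 : 0 < a := ha.1
    have hsubIcc : Set.Icc a b ⊆ Set.Ioo (0:ℝ) δ :=
      fun x hx => ⟨lt_of_lt_of_le ha0 hx.1, lt_of_le_of_lt hx.2 hbδ.2⟩
    have hsubIoc : Set.Ioc a b ⊆ Set.Ioo (0:ℝ) δ :=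
      fun x hx => hsubIcc ⟨hx.1.le, hx.2⟩
    have contP : ∀ p : ℝ, ContinuousOn (fun r : ℝ => r ^ p) (Set.Icc a b) := fun p =>
      continuousOn_id.rpow_const (fun x hx => Or.inl (ne_of_gt (hsubIcc hx).1))
    have contF : ContinuousOn F (Set.Icc a b) := hFcont.mono hsubIcc
    have contF' : ContinuousOn F' (Set.Icc a b) := hF'.mono hsubIcc
    set Gd := fun r : ℝ => (k-1) * r ^ (k-2) * F r ^ 2 + r ^ (k-1) * (2 * F r * F' r)
      with hGddef
    have hderiv : ∀ r ∈ Set.Icc a b,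
        HasDerivAt (fun x : ℝ => x ^ (k-1) * F x ^ 2) (Gd r) r := by
      intro r hr
      have hr' := hsubIcc hr
      have h1 : HasDerivAt (fun x : ℝ => x ^ (k-1)) ((k-1) * r ^ (k-2)) r := by
        have := Real.hasDerivAt_rpow_const (x := r) (p := k-1) (Or.inl (ne_of_gt hr'.1))
        rwa [show k-1-1 = k-2 by ring] at this
      have h2 : HasDerivAt (fun x => F x ^ 2) (2 * F r * F' r) r := by
        refine ((hF r hr').pow 2).congr_deriv ?_
        norm_num
      exact h1.mul h2
    have hGdcont : ContinuousOn Gd (Set.Icc a b) := by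
      apply ContinuousOn.add
      · exact (continuousOn_const.mul (contP (k-2))).mul (contF.pow 2)
      · exact (contP (k-1)).mul ((continuousOn_const.mul contF).mul contF')
    have hGdII : IntervalIntegrable Gd volume a b :=
      hGdcont.intervalIntegrable_of_Icc hab.le
    have hFTC : ∫ r in a..b, Gd r = b ^ (k-1) * F b ^ 2 - a ^ (k-1) * F a ^ 2 :=
      intervalIntegral.integral_eq_sub_of_hasDerivAt
        (fun r hr => hderiv r (by rwa [Set.uIcc_of_le hab.le] at hr)) hGdII
    set q := fun r : ℝ => ((k-1)/2) * (r ^ (k-2) * F r ^ 2) with hqdef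
    set w := fun r : ℝ => (2/(k-1)) * (r ^ k * F' r ^ 2) with hwdef
    have hqII : IntervalIntegrable q volume a b :=
      (continuousOn_const.mul ((contP (k-2)).mul (contF.pow 2))).intervalIntegrable_of_Icc hab.le
    have hwII : IntervalIntegrable w volume a b :=
      (continuousOn_const.mul ((contP k).mul (contF'.pow 2))).intervalIntegrable_of_Icc hab.le
    have hmono : (∫ r in a..b, q r) - ∫ r in a..b, w r ≤ ∫ r in a..b, Gd r := by
      rw [← intervalIntegral.integral_sub hqII hwII]
      apply intervalIntegral.integral_mono_on hab.le (hqII.sub hwII) hGdII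
      intro r hr
      exact hardy_ptwise_aux k r (F r) (F' r) hk (hsubIcc hr).1
    have hw_bound : ∫ r in a..b, w r ≤ (2/(k-1)) * I := by
      rw [intervalIntegral.integral_of_le hab.le]
      have hwmul : ∫ r in Set.Ioc a b, w r = (2/(k-1)) * ∫ r in Set.Ioc a b, r ^ k * F' r ^ 2 :=
        MeasureTheory.integral_const_mul _ _
      rw [hwmul]
      apply mul_le_mul_of_nonneg_left ?_ (by positivity)
      have step1 : ∫ r in Set.Ioc a b, r ^ k * F' r ^ 2 ≤ ∫ r in Set.Ioc a b, bigI r := by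
        apply setIntegral_mono_on
        · exact (((contP k).mul (contF'.pow 2)).integrableOn_Icc).mono_set Set.Ioc_subset_Icc_self
        · exact hInt.mono_set hsubIoc
        · exact measurableSet_Ioc
        · intro r hr
          have h1 : (0:ℝ) ≤ r ^ k := (Real.rpow_pos_of_pos (hsubIoc hr).1 _).le
          show r ^ k * F' r ^ 2 ≤ r ^ k * (F r ^ 2 + F' r ^ 2)
          nlinarith [sq_nonneg (F r), mul_nonneg h1 (sq_nonneg (F r))]
      have step2 : ∫ r in Set.Ioc a b, bigI r ≤ I := by
        apply setIntegral_mono_set hInt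
        · exact ae_restrict_of_forall_mem measurableSet_Ioo hbig_nonneg
        · exact HasSubset.Subset.eventuallyLE hsubIoc
      linarith
    have hGb : b ^ (k-1) * F b ^ 2 - a ^ (k-1) * F a ^ 2 ≤ δ ^ (k-1) * (c₁ * I) := by
      have h1 : 0 ≤ a ^ (k-1) * F a ^ 2 :=
        mul_nonneg (Real.rpow_pos_of_pos ha0 _).le (sq_nonneg _)
      have h2 : b ^ (k-1) ≤ δ ^ (k-1) := Real.rpow_le_rpow hb0.le hbδ.2.le hk1.le
      have h3 : b ^ (k-1) * F b ^ 2 ≤ δ ^ (k-1) * (c₁ * I) :=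
        mul_le_mul h2 hFb (sq_nonneg _) (Real.rpow_nonneg (by linarith) _)
      linarith
    have hq_bound : ∫ r in a..b, q r ≤ δ ^ (k-1) * (c₁ * I) + (2/(k-1)) * I := by
      have := hFTC ▸ hmono
      linarith
    have hqg : ∫ r in a..b, q r = ((k-1)/2) * ∫ r in Set.Ioc a b, g r := by
      rw [intervalIntegral.integral_of_le hab.le, hqdef]
      exact MeasureTheory.integral_const_mul _ _
    rw [hqg] at hq_bound
    have hfin : ∫ r in Set.Ioc a b, g r =
        (2/(k-1)) * (((k-1)/2) * ∫ r in Set.Ioc a b, g r) := by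
      field_simp
    rw [hfin]
    exact mul_le_mul_of_nonneg_left hq_bound (by positivity)
  -- Step 3: pass to the limit a → 0.
  set aseq : ℕ → ℝ := fun n => b / (n+2) with haseqdef
  have haseq_mem : ∀ n, aseq n ∈ Set.Ioo (0:ℝ) b := by
    intro n
    constructor
    · positivity
    · rw [div_lt_iff₀ (by positivity)]
      nlinarith [Nat.cast_nonneg (α := ℝ) n]
  have haseq_tendsto : Filter.Tendsto aseq Filter.atTop (nhds 0) := by
    apply Filter.Tendsto.div_atTop tendsto_const_nhds
    apply Filter.tendsto_atTop_add_const_right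
    exact tendsto_natCast_atTop_atTop
  have hsubIccn : ∀ n, Set.Icc (aseq n) b ⊆ Set.Ioo (0:ℝ) δ := fun n x hx =>
    ⟨lt_of_lt_of_le (haseq_mem n).1 hx.1, lt_of_le_of_lt hx.2 hbδ.2⟩
  have hgIntIoc : ∀ n, IntegrableOn g (Set.Ioc (aseq n) b) := fun n =>
    ((hg_cont.mono (hsubIccn n)).integrableOn_Icc).mono_set Set.Ioc_subset_Icc_self
  have hnormbound : ∀ n, (∫ r in Set.Ioc (aseq n) b, ‖g r‖) ≤
      (2/(k-1)) * (δ ^ (k-1) * (c₁ * I) + (2/(k-1)) * I) := by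
    intro n
    have heq : ∀ r ∈ Set.Ioc (aseq n) b, ‖g r‖ = g r := fun r hr =>
      Real.norm_of_nonneg (hg_nonneg r (hsubIccn n ⟨hr.1.le, hr.2⟩))
    rw [setIntegral_congr_fun measurableSet_Ioc heq]
    exact key _ (haseq_mem n)
  have hInt0b : IntegrableOn g (Set.Ioc (0:ℝ) b) := by
    apply integrableOn_Ioc_of_intervalIntegral_norm_bounded_left hgIntIoc haseq_tendsto
    exact Filter.Eventually.of_forall hnormbound
  have hBound0b : ∫ r in Set.Ioc (0:ℝ) b, g r ≤
      (2/(k-1)) * (δ ^ (k-1) * (c₁ * I) + (2/(k-1)) * I) := by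
    have hmonos : Monotone (fun n => Set.Ioc (aseq n) b) := by
      intro n m hnm
      apply Set.Ioc_subset_Ioc_left
      show b / ((m:ℝ)+2) ≤ b / ((n:ℝ)+2)
      have h2 : ((n:ℝ)+2) ≤ ((m:ℝ)+2) := by exact_mod_cast by linarith [hnm]
      gcongr
    have hunion : (⋃ n, Set.Ioc (aseq n) b) = Set.Ioc (0:ℝ) b := by
      ext x
      simp only [Set.mem_iUnion, Set.mem_Ioc]
      constructor
      · rintro ⟨n, h1, h2⟩
        exact ⟨lt_trans (haseq_mem n).1 h1, h2⟩
      · rintro ⟨h1, h2⟩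
        obtain ⟨n, hn⟩ := (haseq_tendsto.eventually_lt_const h1).exists
        exact ⟨n, hn, h2⟩
    have htend := tendsto_setIntegral_of_monotone (fun n => measurableSet_Ioc) hmonos
      (hunion ▸ hInt0b) (f := g) (μ := volume)
    rw [hunion] at htend
    exact le_of_tendsto htend (Filter.Eventually.of_forall fun n => key _ (haseq_mem n))
  -- Step 4: the piece on (b, δ).
  have hsubb : Set.Ioo b δ ⊆ Set.Ioo (0:ℝ) δ := fun x hx => ⟨lt_trans hb0 hx.1, hx.2⟩
  have hdD : ((2:ℝ)/δ)^2 * (δ/2)^2 = 1 := by field_simp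
  have hD : (0:ℝ) ≤ (2/δ)^2 := by positivity
  have hpt2 : ∀ r ∈ Set.Ioo b δ, g r ≤ (2/δ)^2 * bigI r := by
    intro r hr
    have hr0 : 0 < r := lt_trans hb0 hr.1
    have hrδ2 : δ/2 < r := lt_trans hb.1 hr.1
    have heq : r ^ (k-2) * r ^ (2:ℕ) = r ^ k := by
      rw [← Real.rpow_natCast r 2, ← Real.rpow_add hr0]
      norm_num
    have hP : (0:ℝ) ≤ r ^ (k-2) := (Real.rpow_pos_of_pos hr0 _).le
    have hstep : (δ/2)^2 * (r ^ (k-2) * F r ^ 2) ≤ r ^ k * (F r ^ 2 + F' r ^ 2) := by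
      have hr2 : (δ/2)^2 ≤ r^(2:ℕ) := by nlinarith
      nlinarith [mul_nonneg hP (sq_nonneg (F r)), mul_nonneg hP (sq_nonneg (F' r)),
        mul_nonneg (mul_nonneg hP (sq_nonneg (F' r))) (sq_nonneg r)]
    calc g r = ((2/δ)^2 * (δ/2)^2) * (r ^ (k-2) * F r ^ 2) := by rw [hdD, one_mul]
      _ = (2/δ)^2 * ((δ/2)^2 * (r ^ (k-2) * F r ^ 2)) := by ring
      _ ≤ (2/δ)^2 * (r ^ k * (F r ^ 2 + F' r ^ 2)) := by
          exact mul_le_mul_of_nonneg_left hstep hD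
  have hIntD : IntegrableOn (fun r => (2/δ)^2 * bigI r) (Set.Ioo b δ) :=
    (hInt.mono_set hsubb).const_mul _
  have hIntbδ : IntegrableOn g (Set.Ioo b δ) := by
    apply Integrable.mono' hIntD
    · exact (hg_cont.mono hsubb).aestronglyMeasurable measurableSet_Ioo
    · apply ae_restrict_of_forall_mem measurableSet_Ioo
      intro r hr
      rw [Real.norm_of_nonneg (hg_nonneg r (hsubb hr))]
      exact hpt2 r hr
  have hBoundbδ : ∫ r in Set.Ioo b δ, g r ≤ (2/δ)^2 * I := by
    calc (∫ r in Set.Ioo b δ, g r) ≤ ∫ r in Set.Ioo b δ, (2/δ)^2 * bigI r :=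
          setIntegral_mono_on hIntbδ hIntD measurableSet_Ioo hpt2
      _ = (2/δ)^2 * ∫ r in Set.Ioo b δ, bigI r := MeasureTheory.integral_const_mul _ _
      _ ≤ (2/δ)^2 * I := by
          apply mul_le_mul_of_nonneg_left ?_ hD
          apply setIntegral_mono_set hInt
          · exact ae_restrict_of_forall_mem measurableSet_Ioo hbig_nonneg
          · exact HasSubset.Subset.eventuallyLE hsubb
  -- Step 5: combine.
  have hsplit : Set.Ioc (0:ℝ) b ∪ Set.Ioo b δ = Set.Ioo 0 δ := by
    ext x
    simp only [Set.mem_union, Set.mem_Ioc, Set.mem_Ioo]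
    constructor
    · rintro (⟨h1,h2⟩|⟨h1,h2⟩) <;> constructor <;> linarith [hb.2, hb0]
    · rintro ⟨h1,h2⟩
      rcases le_or_gt x b with h|h
      · exact Or.inl ⟨h1, h⟩
      · exact Or.inr ⟨h, h2⟩
  have hdisj : Disjoint (Set.Ioc (0:ℝ) b) (Set.Ioo b δ) := by
    rw [Set.disjoint_left]
    rintro x ⟨h1,h2⟩ ⟨h3,h4⟩
    linarith
  have hunion2 : ∫ r in Set.Ioo (0:ℝ) δ, r ^ (k-2) * F r ^ 2 =
      (∫ r in Set.Ioc (0:ℝ) b, g r) + ∫ r in Set.Ioo b δ, g r := by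
    rw [← hsplit, setIntegral_union hdisj measurableSet_Ioo hInt0b hIntbδ]
  rw [hunion2]
  have hCeq : ((2/(k-1)) * (δ ^ (k-1) * c₁ + 2/(k-1)) + (2/δ)^2) * I =
      (2/(k-1)) * (δ ^ (k-1) * (c₁ * I) + (2/(k-1)) * I) + (2/δ)^2 * I := by ring
  rw [hCeq]
  exact add_le_add hBound0b hBoundbδ
end

section
/- Let γ > 1 and let h : [0,∞) → ℝ solve the ODE h'' + h' - (1/(3γ-1))((1+t)^{1/(3γ-1)} + h)^{2-3γ} + η̄_rtt + η̄_rt = 0 with h(0) = h'(0) = 0, where η̄_r(t) = (1+t)^{1/(3γ-1)}. Then h(t) ≥ 0 for all t ≥ 0 and h is uniformly bounded: there is a constant C = C(γ) such that 0 ≤ h(t) ≤ C for all t ≥ 0. -/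
open Real Set

lemma myMonoOn {f f' : ℝ → ℝ} {s : Set ℝ} (hs : Convex ℝ s)
    (hd : ∀ x ∈ s, HasDerivAt f (f' x) x)
    (hp : ∀ x ∈ s, 0 ≤ f' x) : MonotoneOn f s := by
  apply monotoneOn_of_deriv_nonneg hs
  · exact fun x hx => (hd x hx).continuousAt.continuousWithinAt
  · intro x hx
    exact ((hd x (interior_subset hx)).differentiableAt).differentiableWithinAt
  · intro x hx
    rw [(hd x (interior_subset hx)).deriv]
    exact hp x (interior_subset hx)

lemma myAntiOn {f f' : ℝ → ℝ} {s : Set ℝ} (hs : Convex ℝ s)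
    (hd : ∀ x ∈ s, HasDerivAt f (f' x) x)
    (hp : ∀ x ∈ s, f' x ≤ 0) : AntitoneOn f s := by
  apply antitoneOn_of_deriv_nonpos hs
  · exact fun x hx => (hd x hx).continuousAt.continuousWithinAt
  · intro x hx
    exact ((hd x (interior_subset hx)).differentiableAt).differentiableWithinAt
  · intro x hx
    rw [(hd x (interior_subset hx)).deriv]
    exact hp x (interior_subset hx)

lemma hasDerivAt_one_add_rpow (c t : ℝ) (ht : -1 < t) :
    HasDerivAt (fun s : ℝ => (1 + s) ^ c) (c * (1 + t) ^ (c - 1)) t := by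
  have h1 : HasDerivAt (fun s : ℝ => 1 + s) 1 t := (hasDerivAt_id t).const_add 1
  have hne : (1 + t) ≠ 0 := ne_of_gt (by linarith)
  have h2 := (Real.hasDerivAt_rpow_const (p := c) (Or.inl hne)).comp t h1
  simpa [Function.comp_def] using h2

/-- exponential-weight Gronwall: if `K * D ≤ D'` on `[s1,s0]` and `D s1 = 0` then `0 ≤ D s0`. -/
lemma gronwall_aux (K : ℝ) (D D' : ℝ → ℝ) (s1 s0 : ℝ) (h01 : s1 ≤ s0)
    (hd : ∀ s ∈ Icc s1 s0, HasDerivAt D (D' s) s)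
    (hKD : ∀ s ∈ Icc s1 s0, K * D s ≤ D' s) (hD1 : D s1 = 0) : 0 ≤ D s0 := by
  have hF : ∀ s ∈ Icc s1 s0, HasDerivAt (fun u => Real.exp (-K * u) * D u)
      (Real.exp (-K * s) * (-K) * D s + Real.exp (-K * s) * D' s) s := by
    intro s hs
    have he : HasDerivAt (fun u : ℝ => Real.exp (-K * u)) (Real.exp (-K * s) * (-K)) s := by
      simpa using ((hasDerivAt_id s).const_mul (-K)).exp
    exact he.mul (hd s hs)
  have hmono : MonotoneOn (fun u => Real.exp (-K * u) * D u) (Icc s1 s0) := by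
    apply myMonoOn (convex_Icc s1 s0) hF
    intro s hs
    have h1 := hKD s hs
    have h2 : (0:ℝ) < Real.exp (-K * s) := Real.exp_pos _
    nlinarith
  have := hmono (left_mem_Icc.mpr h01) (right_mem_Icc.mpr h01) h01
  simp only [hD1, mul_zero] at this
  nlinarith [Real.exp_pos (-K * s0)]

/-- first-crossing: if `D 0 ≥ 0` and `D s0 < 0`, there is a last zero `s1` before `s0`
with `D ≤ 0` on `[s1, s0]`. -/
lemma first_neg (D : ℝ → ℝ) (s0 : ℝ) (h0 : 0 ≤ s0) (hc : ContinuousOn D (Icc 0 s0))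
    (hD0 : 0 ≤ D 0) (hDs0 : D s0 < 0) :
    ∃ s1, s1 ∈ Icc 0 s0 ∧ D s1 = 0 ∧ s1 < s0 ∧ ∀ s ∈ Icc s1 s0, D s ≤ 0 := by
  set U := Icc (0:ℝ) s0 ∩ D ⁻¹' (Ici 0) with hU
  have hUclosed : IsClosed U := hc.preimage_isClosed_of_isClosed isClosed_Icc isClosed_Ici
  have hUcomp : IsCompact U := IsCompact.of_isClosed_subset isCompact_Icc hUclosed inter_subset_left
  have hU0 : (0:ℝ) ∈ U := ⟨⟨le_rfl, h0⟩, hD0⟩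
  have hUne : U.Nonempty := ⟨0, hU0⟩
  set s1 := sSup U with hs1def
  have hs1U : s1 ∈ U := hUcomp.sSup_mem hUne
  have hs1mem : s1 ∈ Icc 0 s0 := hs1U.1
  have hDs1 : 0 ≤ D s1 := hs1U.2
  have hs1lt : s1 < s0 := by
    rcases eq_or_lt_of_le hs1mem.2 with h | h
    · exfalso; rw [h] at hDs1; linarith
    · exact h
  have hneg : ∀ s ∈ Ioc s1 s0, D s < 0 := by
    intro s hs
    by_contra hcon
    push_neg at hcon
    have hsU : s ∈ U := ⟨⟨le_trans hs1mem.1 hs.1.le, hs.2⟩, hcon⟩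
    have := le_csSup hUcomp.bddAbove hsU
    exact absurd this (not_le.mpr hs.1)
  have hDs1' : D s1 ≤ 0 := by
    have hct : ContinuousWithinAt D (Ioi s1) s1 :=
      (hc s1 hs1mem).mono_of_mem_nhdsWithin (Filter.mem_of_superset
        (Ioc_mem_nhdsGT hs1lt) (fun x hx => ⟨le_trans hs1mem.1 hx.1.le, hx.2⟩))
    refine le_of_tendsto hct ?_
    exact Filter.eventually_of_mem (Ioc_mem_nhdsGT hs1lt) (fun s hs => (hneg s hs).le)
  refine ⟨s1, hs1mem, le_antisymm hDs1' hDs1, hs1lt, ?_⟩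
  intro s hs
  rcases eq_or_lt_of_le hs.1 with h | h
  · rw [← h]; exact le_antisymm hDs1' hDs1 |>.le
  · exact (hneg s ⟨h, hs.2⟩).le

/-- if `f ≥ c` on `[0,x)` and `f` continuous at `x > 0` then `f x ≥ c`. -/
lemma left_limit_ge (f : ℝ → ℝ) (c x : ℝ) (hx : 0 < x) (hc : ContinuousAt f x)
    (hall : ∀ s, 0 ≤ s → s < x → c ≤ f s) : c ≤ f x := by
  have ht : Filter.Tendsto f (nhdsWithin x (Iio x)) (nhds (f x)) :=
    hc.continuousWithinAt.tendsto
  refine ge_of_tendsto ht ?_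
  have hmem : Ico (0:ℝ) x ∈ nhdsWithin x (Iio x) := by
    rw [show Ico (0:ℝ) x = Ici 0 ∩ Iio x from rfl]
    exact Filter.inter_mem (mem_nhdsWithin_of_mem_nhds (Ici_mem_nhds hx)) self_mem_nhdsWithin
  exact Filter.eventually_of_mem hmem (fun s hs => hall s hs.1 hs.2)

/-- first time a continuous function starting at `1` dips to `1/2` on `[0,t]`. -/
lemma first_below (N : ℝ → ℝ) (t : ℝ) (ht : 0 ≤ t) (hc : ContinuousOn N (Icc 0 t))
    (hN0 : N 0 = 1) (hbad : ∃ s, s ∈ Icc (0:ℝ) t ∧ N s < 1/2) :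
    ∃ s2, s2 ∈ Icc (0:ℝ) t ∧ N s2 ≤ 1/2 ∧ 0 < s2 ∧ ∀ s, 0 ≤ s → s < s2 → 1/2 < N s := by
  obtain ⟨sb, hsb, hsbN⟩ := hbad
  set V := Icc (0:ℝ) t ∩ N ⁻¹' (Iic (1/2)) with hV
  have hVclosed : IsClosed V := hc.preimage_isClosed_of_isClosed isClosed_Icc isClosed_Iic
  have hVcomp : IsCompact V := IsCompact.of_isClosed_subset isCompact_Icc hVclosed inter_subset_left
  have hVne : V.Nonempty := ⟨sb, hsb, hsbN.le⟩
  set s2 := sInf V with hs2def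
  have hs2V : s2 ∈ V := hVcomp.sInf_mem hVne
  have hs2mem : s2 ∈ Icc 0 t := hs2V.1
  have hs2N : N s2 ≤ 1/2 := hs2V.2
  have hs2pos : 0 < s2 := by
    rcases eq_or_lt_of_le hs2mem.1 with h | h
    · exfalso; rw [← h, hN0] at hs2N; linarith
    · exact h
  refine ⟨s2, hs2mem, hs2N, hs2pos, ?_⟩
  intro s h0s hss2
  by_contra hcon
  push_neg at hcon
  have hsV : s ∈ V := ⟨⟨h0s, le_trans hss2.le hs2mem.2⟩, hcon⟩
  exact absurd (csInf_le hVcomp.bddBelow hsV) (not_le.mpr hss2)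

lemma barrier_small (a E X2 X3 : ℝ) (ha0 : 0 < a) (ha2 : a < 1/2) (hE : 1/3 ≤ E)
    (hX3 : X3 ≤ 1) (hX3n : 0 ≤ X3) (hX2n : 0 ≤ X2) :
    a*(1-a)*X2 ≤ (-(18*a)*E + 3*a*(1-a)*((a-2)*X3)) + (36*a*E + 3*a*(1-a)*X2) := by
  have t1 : 18*a*(1/3) ≤ 18*a*E := mul_le_mul_of_nonneg_left hE (by linarith)
  have t2 : 3*a*((1-a)*(2-a))*X3 ≤ 3*a*((1-a)*(2-a))*1 :=
    mul_le_mul_of_nonneg_left hX3 (mul_nonneg (mul_nonneg (by norm_num : (0:ℝ) ≤ 3) ha0.le)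
      (mul_nonneg (by linarith) (by linarith)))
  have t3 : 0 ≤ 2*(a*((1-a)*X2)) :=
    mul_nonneg (by norm_num) (mul_nonneg ha0.le (mul_nonneg (by linarith) hX2n))
  have t4 : 0 ≤ 3*(a*a)*(3-a) :=
    mul_nonneg (mul_nonneg (by norm_num) (mul_nonneg ha0.le ha0.le)) (by linarith)
  nlinarith [t1, t2, t3, t4]

lemma barrier_large (a E X3 s : ℝ) (ha0 : 0 < a) (ha2 : a < 1/2) (hEn : 0 ≤ E)
    (hX3n : 0 ≤ X3) (hs2 : 2 < s) :
    a*(1-a)*(X3*(1+s)) ≤ (-(18*a)*E + 3*a*(1-a)*((a-2)*X3)) + (36*a*E + 3*a*(1-a)*(X3*(1+s))) := by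
  nlinarith [mul_nonneg (mul_nonneg (mul_nonneg ha0.le (by linarith : (0:ℝ) ≤ 1-a)) hX3n)
      (by linarith : (0:ℝ) ≤ 2*s - 4),
    mul_nonneg (mul_nonneg ha0.le (by linarith : (0:ℝ) ≤ 1-a)) (mul_nonneg hX3n ha0.le),
    mul_nonneg hEn ha0.le]


/-- The correction `h` solving `h'' + h' - (1/(3γ-1))(η̄_r + h)^{2-3γ} + η̄_rtt + η̄_rt = 0`
with zero initial data is nonnegative and uniformly bounded. -/
theorem correction_nonneg_bounded (γ : ℝ) (hγ : 1 < γ)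
    (h h' h'' : ℝ → ℝ)
    (hd1 : ∀ t : ℝ, HasDerivAt h (h' t) t)
    (hd2 : ∀ t : ℝ, HasDerivAt h' (h'' t) t)
    (hode : ∀ t ≥ (0 : ℝ),
      h'' t + h' t - (1 / (3 * γ - 1)) * ((1 + t) ^ ((1 : ℝ) / (3 * γ - 1)) + h t) ^ (2 - 3 * γ)
        + (1 / (3 * γ - 1)) * ((1 : ℝ) / (3 * γ - 1) - 1) * (1 + t) ^ ((1 : ℝ) / (3 * γ - 1) - 2)
        + (1 / (3 * γ - 1)) * (1 + t) ^ ((1 : ℝ) / (3 * γ - 1) - 1) = 0)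
    (h0 : h 0 = 0) (h'0 : h' 0 = 0) :
    ∃ C : ℝ, ∀ t ≥ (0 : ℝ), 0 ≤ h t ∧ h t ≤ C := by
  have hA : (2:ℝ) < 3*γ - 1 := by linarith
  set a : ℝ := 1 / (3*γ - 1) with ha_def
  set p : ℝ := 2 - 3*γ with hp_def
  have ha0 : 0 < a := by rw [ha_def]; exact div_pos one_pos (by linarith)
  have ha2 : a < 1/2 := by rw [ha_def, div_lt_div_iff₀ (by linarith) (by norm_num)]; linarith
  have hap : a * p = a - 1 := by rw [ha_def, hp_def]; field_simp; ring
  have hAa : (3*γ-1) * a = 1 := by rw [ha_def]; field_simp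
  have hpneg : p < -1 := by rw [hp_def]; linarith
  clear_value a p
  set N : ℝ → ℝ := fun s => (1+s)^a + h s with hN_def
  set N1 : ℝ → ℝ := fun s => a * (1+s)^(a-1) + h' s with hN1_def
  set N2 : ℝ → ℝ := fun s => a * (a-1) * (1+s)^(a-2) + h'' s with hN2_def
  set DD : ℝ → ℝ := fun s => N1 s - a * (N s)^p with hDD_def
  clear_value N N1 N2 DD
  -- derivative facts
  have hNd : ∀ t : ℝ, -1 < t → HasDerivAt N (N1 t) t := by
    intro t ht
    rw [hN_def, hN1_def]
    exact (hasDerivAt_one_add_rpow a t ht).add (hd1 t)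
  have hN1d : ∀ t : ℝ, -1 < t → HasDerivAt N1 (N2 t) t := by
    intro t ht
    rw [hN1_def, hN2_def]
    have h1 := (hasDerivAt_one_add_rpow (a-1) t ht).const_mul a
    rw [show a - 1 - 1 = a - 2 by ring] at h1
    exact (h1.congr_deriv (by ring)).add (hd2 t)
  have hNode : ∀ t : ℝ, 0 ≤ t → N2 t + N1 t = a * (N t) ^ p := by
    intro t ht
    have hh := hode t ht
    simp only [hN_def, hN1_def, hN2_def]
    linarith
  have hN0 : N 0 = 1 := by
    simp only [hN_def]; rw [h0]; norm_num
  have hN10 : N1 0 = a := by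
    simp only [hN1_def]; rw [h'0]; norm_num
  have hDD0 : DD 0 = 0 := by
    simp only [hDD_def]; rw [hN0, hN10, Real.one_rpow]; ring
  have hDDd : ∀ s : ℝ, -1 < s → N s ≠ 0 →
      HasDerivAt DD (N2 s - a * (p * (N s)^(p-1) * N1 s)) s := by
    intro s hs hNs
    have h1 : HasDerivAt (fun u => (N u)^p) (p * (N s)^(p-1) * N1 s) s :=
      (Real.hasDerivAt_rpow_const (Or.inl hNs)).comp s (hNd s hs)
    rw [hDD_def]
    exact (hN1d s hs).sub (h1.const_mul a)
  -- the Gronwall step: on any interval where N ≥ 1/2, DD ≥ 0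
  have keyB1 : ∀ T : ℝ, 0 ≤ T → (∀ s ∈ Icc (0:ℝ) T, 1/2 ≤ N s) →
      ∀ s ∈ Icc (0:ℝ) T, 0 ≤ DD s := by
    intro T hT hgood
    by_contra hbad
    push_neg at hbad
    obtain ⟨s0, hs0, hDs0⟩ := hbad
    have hsub : Icc (0:ℝ) s0 ⊆ Icc 0 T := Icc_subset_Icc le_rfl hs0.2
    have hNpos : ∀ s ∈ Icc (0:ℝ) s0, (0:ℝ) < N s :=
      fun s hs => lt_of_lt_of_le (by norm_num) (hgood s (hsub hs))
    have hgtm : ∀ s ∈ Icc (0:ℝ) s0, (-1:ℝ) < s := fun s hs => by linarith [hs.1]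
    have hDcont : ContinuousOn DD (Icc (0:ℝ) s0) := fun s hs =>
      ((hDDd s (hgtm s hs) (hNpos s hs).ne').continuousAt).continuousWithinAt
    obtain ⟨s1, hs1mem, hDs1z, hs1lt, hDle⟩ :=
      first_neg DD s0 hs0.1 hDcont (le_of_eq hDD0.symm) hDs0
    -- constant K
    have hK3 : (0:ℝ) < 3*γ - 2 := by linarith
    set K : ℝ := a * (3*γ - 2) * (1/2:ℝ)^(p-1) with hK_def
    have hKpos : 0 < K := by
      exact mul_pos (mul_pos ha0 hK3) (Real.rpow_pos_of_pos (by norm_num) _)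
    -- apply gronwall on [s1, s0]
    have hsub1 : Icc s1 s0 ⊆ Icc (0:ℝ) s0 := Icc_subset_Icc hs1mem.1 le_rfl
    have hcontr : 0 ≤ DD s0 := by
      apply gronwall_aux K DD (fun s => N2 s - a * (p * (N s)^(p-1) * N1 s)) s1 s0 hs1lt.le
      · exact fun s hs => hDDd s (hgtm s (hsub1 hs)) (hNpos s (hsub1 hs)).ne'
      · intro s hs
        have hs' : s ∈ Icc (0:ℝ) s0 := hsub1 hs
        have hns : (0:ℝ) < N s := hNpos s hs'
        have hnhalf : (1/2:ℝ) ≤ N s := hgood s (hsub hs')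
        have hd0 : DD s ≤ 0 := hDle s hs
        have e2 : N1 s = DD s + a * (N s)^p := by simp only [hDD_def]; ring
        have e1 : N2 s = a * (N s)^p - N1 s := by linarith [hNode s hs'.1]
        have hY : (0:ℝ) ≤ (N s)^(p-1) := Real.rpow_nonneg hns.le _
        have hX : (0:ℝ) ≤ (N s)^p := Real.rpow_nonneg hns.le _
        have hcK : a * (3*γ-2) * (N s)^(p-1) ≤ K := by
          rw [hK_def]
          have hmono : (N s)^(p-1) ≤ (1/2:ℝ)^(p-1) :=
            Real.rpow_le_rpow_of_nonpos (by norm_num) hnhalf (by linarith)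
          exact mul_le_mul_of_nonneg_left hmono (by positivity)
        have expand : N2 s - a * (p * (N s)^(p-1) * N1 s) - K * DD s =
            (a*(3*γ-2)*(N s)^(p-1) - 1 - K) * DD s
              + a*a*(3*γ-2)*((N s)^(p-1) * (N s)^p) := by
          rw [e1, e2, hp_def]; ring
        have t1 : 0 ≤ (a*(3*γ-2)*(N s)^(p-1) - 1 - K) * DD s :=
          mul_nonneg_of_nonpos_of_nonpos (by linarith) hd0
        have t2 : 0 ≤ a*a*(3*γ-2)*((N s)^(p-1) * (N s)^p) := by positivity
        linarith [expand]
      · exact hDs1z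
    linarith
  -- bootstrap: N stays above 1/2 (in fact above 1)
  have goodAll : ∀ t : ℝ, 0 ≤ t → ∀ s ∈ Icc (0:ℝ) t, 1/2 ≤ N s := by
    intro t ht
    by_contra hbad
    push_neg at hbad
    have hNcont : ContinuousOn N (Icc (0:ℝ) t) := fun s hs =>
      (hNd s (by linarith [hs.1])).continuousAt.continuousWithinAt
    obtain ⟨s2, hs2mem, hs2N, hs2pos, hbefore⟩ := first_below N t ht hNcont hN0 hbad
    have hge1 : ∀ s, 0 ≤ s → s < s2 → 1 ≤ N s := by
      intro s h0s hss2
      have hgood' : ∀ u ∈ Icc (0:ℝ) s, 1/2 ≤ N u := fun u hu =>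
        (hbefore u hu.1 (lt_of_le_of_lt hu.2 hss2)).le
      have hD' := keyB1 s h0s hgood'
      have hmono : MonotoneOn N (Icc (0:ℝ) s) := by
        apply myMonoOn (convex_Icc 0 s) (fun u hu => hNd u (by linarith [hu.1]))
        intro u hu
        have hNu : (0:ℝ) < N u := lt_of_lt_of_le (by norm_num) (hgood' u hu)
        have hpow : 0 < a * (N u)^p := mul_pos ha0 (Real.rpow_pos_of_pos hNu _)
        have : DD u = N1 u - a * (N u)^p := by simp only [hDD_def]
        have := hD' u hu
        simp only [hDD_def] at this
        linarith
      have := hmono (left_mem_Icc.mpr h0s) ⟨h0s, le_rfl⟩ h0s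
      rw [hN0] at this
      exact this
    have hcontat : ContinuousAt N s2 := (hNd s2 (by linarith)).continuousAt
    have h1le : (1:ℝ) ≤ N s2 := left_limit_ge N 1 s2 hs2pos hcontat hge1
    have := le_trans h1le hs2N
    norm_num at this
  have hNhalf : ∀ s : ℝ, 0 ≤ s → (1/2:ℝ) ≤ N s := fun s hs => goodAll s hs s ⟨hs, le_rfl⟩
  have hNpos' : ∀ s : ℝ, 0 ≤ s → (0:ℝ) < N s := fun s hs =>
    lt_of_lt_of_le (by norm_num) (hNhalf s hs)
  have hDall : ∀ s : ℝ, 0 ≤ s → 0 ≤ DD s := fun s hs =>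
    keyB1 s hs (goodAll s hs) s ⟨hs, le_rfl⟩
  -- lower bound: (N t)^(3γ-1) ≥ 1 + t hence N t ≥ (1+t)^a hence h t ≥ 0
  have hlow : ∀ t : ℝ, 0 ≤ t → 0 ≤ h t := by
    intro t ht
    have hGd : ∀ s ∈ Icc (0:ℝ) t, HasDerivAt (fun u => (N u)^(3*γ-1) - u)
        ((3*γ-1) * (N s)^(3*γ-1-1) * N1 s - 1) s := by
      intro s hs
      have h1 : HasDerivAt (fun u => (N u)^(3*γ-1)) ((3*γ-1) * (N s)^(3*γ-1-1) * N1 s) s :=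
        (Real.hasDerivAt_rpow_const (Or.inl (hNpos' s hs.1).ne')).comp s (hNd s (by linarith [hs.1]))
      exact h1.sub (hasDerivAt_id s)
    have hG'pos : ∀ s ∈ Icc (0:ℝ) t, 0 ≤ (3*γ-1) * (N s)^(3*γ-1-1) * N1 s - 1 := by
      intro s hs
      have hns : (0:ℝ) < N s := hNpos' s hs.1
      have e : (N s)^(3*γ-1-1) * (N s)^p = 1 := by
        rw [← Real.rpow_add hns, hp_def, show 3*γ-1-1+(2-3*γ) = 0 by ring, Real.rpow_zero]
      have hN1ge : a * (N s)^p ≤ N1 s := by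
        have := hDall s hs.1
        simp only [hDD_def] at this
        linarith
      have hfac : (0:ℝ) ≤ (3*γ-1) * (N s)^(3*γ-1-1) :=
        mul_nonneg (by linarith) (Real.rpow_nonneg hns.le _)
      have step : (3*γ-1) * (N s)^(3*γ-1-1) * (a * (N s)^p) ≤
          (3*γ-1) * (N s)^(3*γ-1-1) * N1 s := mul_le_mul_of_nonneg_left hN1ge hfac
      have eval : (3*γ-1) * (N s)^(3*γ-1-1) * (a * (N s)^p) = 1 := by
        calc (3*γ-1) * (N s)^(3*γ-1-1) * (a * (N s)^p)
            = ((3*γ-1)*a) * ((N s)^(3*γ-1-1) * (N s)^p) := by ring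
          _ = 1 := by rw [hAa, e]; norm_num
      linarith
    have hGmono : MonotoneOn (fun u => (N u)^(3*γ-1) - u) (Icc (0:ℝ) t) :=
      myMonoOn (convex_Icc 0 t) hGd hG'pos
    have hstep := hGmono (left_mem_Icc.mpr ht) ⟨ht, le_rfl⟩ ht
    simp only [hN0, Real.one_rpow] at hstep
    have h1t : (1:ℝ) + t ≤ (N t)^(3*γ-1) := by linarith
    have hr1 : (1+t)^a ≤ ((N t)^(3*γ-1))^a :=
      Real.rpow_le_rpow (by linarith) h1t ha0.le
    have hr2 : ((N t)^(3*γ-1))^a = N t := by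
      rw [← Real.rpow_mul (hNpos' t ht).le, hAa, Real.rpow_one]
    have : (1+t)^a ≤ N t := by rw [hr2] at hr1; exact hr1
    simp only [hN_def] at this
    linarith
  -- upper bound via barrier ψ
  set ψ : ℝ → ℝ := fun s => 72*a*(1 - Real.exp (-(s/2))) + 3*a*(1 - (1+s)^(a-1)) with hψ_def
  set ψ1 : ℝ → ℝ := fun s => 36*a*Real.exp (-(s/2)) + 3*a*(1-a)*(1+s)^(a-2) with hψ1_def
  set ψ2 : ℝ → ℝ := fun s => -(18*a)*Real.exp (-(s/2)) + 3*a*(1-a)*((a-2)*(1+s)^(a-3)) with hψ2_def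
  clear_value ψ ψ1 ψ2
  have hexpd : ∀ s : ℝ, HasDerivAt (fun u : ℝ => Real.exp (-(u/2)))
      (Real.exp (-(s/2)) * (-(1/2))) s := by
    intro s
    exact (((hasDerivAt_id s).div_const 2).neg).exp
  have hψd : ∀ s : ℝ, -1 < s → HasDerivAt ψ (ψ1 s) s := by
    intro s hs
    rw [hψ_def, hψ1_def]
    have hterm1 : HasDerivAt (fun u : ℝ => 72*a*(1 - Real.exp (-(u/2))))
        (36*a*Real.exp (-(s/2))) s := by
      have := ((hexpd s).const_sub 1).const_mul (72*a)
      exact this.congr_deriv (by ring)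
    have hterm2 : HasDerivAt (fun u : ℝ => 3*a*(1 - (1+u)^(a-1)))
        (3*a*(1-a)*(1+s)^(a-2)) s := by
      have h1 := ((hasDerivAt_one_add_rpow (a-1) s hs).const_sub 1).const_mul (3*a)
      rw [show a - 1 - 1 = a - 2 by ring] at h1
      exact h1.congr_deriv (by ring)
    exact hterm1.add hterm2
  have hψ1d : ∀ s : ℝ, -1 < s → HasDerivAt ψ1 (ψ2 s) s := by
    intro s hs
    rw [hψ1_def, hψ2_def]
    have hterm1 : HasDerivAt (fun u : ℝ => 36*a*Real.exp (-(u/2)))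
        (-(18*a)*Real.exp (-(s/2))) s := by
      have := (hexpd s).const_mul (36*a)
      exact this.congr_deriv (by ring)
    have hterm2 : HasDerivAt (fun u : ℝ => 3*a*(1-a)*(1+u)^(a-2))
        (3*a*(1-a)*((a-2)*(1+s)^(a-3))) s := by
      have h1 := (hasDerivAt_one_add_rpow (a-2) s hs).const_mul (3*a*(1-a))
      rw [show a - 2 - 1 = a - 3 by ring] at h1
      exact h1.congr_deriv (by ring)
    exact hterm1.add hterm2
  -- key comparison of forcing terms
  have hcomp : ∀ s : ℝ, 0 ≤ s → h'' s + h' s ≤ ψ2 s + ψ1 s := by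
    intro s hs
    have h1s : (0:ℝ) < 1 + s := by linarith
    have e1 : h'' s + h' s = a * (N s)^p - a*(a-1)*(1+s)^(a-2) - a*(1+s)^(a-1) := by
      have hh := hNode s hs
      simp only [hN1_def, hN2_def] at hh
      linarith
    have hNge : (1+s)^a ≤ N s := by
      simp only [hN_def]
      have := hlow s hs
      linarith
    have hb : a * (N s)^p ≤ a * (1+s)^(a-1) := by
      have h2 : (N s)^p ≤ ((1+s)^a)^p :=
        Real.rpow_le_rpow_of_nonpos (Real.rpow_pos_of_pos h1s a) hNge (by linarith)
      have h3 : ((1+s)^a)^p = (1+s)^(a-1) := by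
        rw [← Real.rpow_mul h1s.le, hap]
      rw [h3] at h2
      exact mul_le_mul_of_nonneg_left h2 ha0.le
    have heq0 : a*(1-a)*(1+s)^(a-2) = -(a*(a-1)*(1+s)^(a-2)) := by ring
    have hb2 : h'' s + h' s ≤ a*(1-a)*(1+s)^(a-2) := by
      rw [e1, heq0]; linarith
    have key : a*(1-a)*(1+s)^(a-2) ≤ ψ2 s + ψ1 s := by
      simp only [hψ1_def, hψ2_def]
      have hX2n : (0:ℝ) ≤ (1+s)^(a-2) := Real.rpow_nonneg h1s.le _
      have hX3n : (0:ℝ) ≤ (1+s)^(a-3) := Real.rpow_nonneg h1s.le _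
      rcases le_or_gt s 2 with hs2 | hs2
      · have hE : (1/3:ℝ) ≤ Real.exp (-(s/2)) := by
          have hmono : Real.exp (-1) ≤ Real.exp (-(s/2)) := Real.exp_le_exp.mpr (by linarith)
          have h3 : Real.exp 1 ≤ 3 := by
            have := Real.exp_one_lt_d9
            linarith
          have hinv : (1/3:ℝ) ≤ Real.exp (-1) := by
            rw [Real.exp_neg, inv_eq_one_div]
            exact one_div_le_one_div_of_le (Real.exp_pos 1) h3
          linarith
        have hX3 : (1+s)^(a-3) ≤ 1 :=
          Real.rpow_le_one_of_one_le_of_nonpos (by linarith) (by linarith)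
        exact barrier_small a (Real.exp (-(s/2))) ((1+s)^(a-2)) ((1+s)^(a-3))
          ha0 ha2 hE hX3 hX3n hX2n
      · have hX23 : (1+s)^(a-2) = (1+s)^(a-3) * (1+s) := by
          rw [show a-2 = (a-3)+1 by ring, Real.rpow_add_one h1s.ne']
        have hEn : (0:ℝ) ≤ Real.exp (-(s/2)) := (Real.exp_pos _).le
        rw [hX23]
        exact barrier_large a (Real.exp (-(s/2))) ((1+s)^(a-3)) s ha0 ha2 hEn hX3n hs2
    linarith
  -- damped comparison: q := exp * (h' - ψ1) is nonincreasing on [0,∞)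
  have hqd : ∀ s : ℝ, 0 ≤ s → HasDerivAt (fun u => Real.exp u * (h' u - ψ1 u))
      (Real.exp s * (h' s - ψ1 s) + Real.exp s * (h'' s - ψ2 s)) s := by
    intro s hs
    exact (Real.hasDerivAt_exp s).mul ((hd2 s).sub (hψ1d s (by linarith)))
  have hqanti : AntitoneOn (fun u => Real.exp u * (h' u - ψ1 u)) (Ici (0:ℝ)) := by
    apply myAntiOn (convex_Ici 0) (fun s hs => hqd s hs)
    intro s hs
    have hc := hcomp s hs
    have he : (0:ℝ) < Real.exp s := Real.exp_pos s
    have h2 : (h' s - ψ1 s) + (h'' s - ψ2 s) ≤ 0 := by linarith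
    calc Real.exp s * (h' s - ψ1 s) + Real.exp s * (h'' s - ψ2 s)
        = Real.exp s * ((h' s - ψ1 s) + (h'' s - ψ2 s)) := by ring
      _ ≤ 0 := mul_nonpos_iff.mpr (Or.inl ⟨he.le, h2⟩)
  have hψ10 : ψ1 0 = 36*a + 3*a*(1-a) := by
    simp only [hψ1_def]
    norm_num
  have hq0 : Real.exp 0 * (h' 0 - ψ1 0) ≤ 0 := by
    rw [Real.exp_zero, h'0, hψ10]
    nlinarith [ha0.le, ha2]
  have hd'le : ∀ s : ℝ, 0 ≤ s → h' s ≤ ψ1 s := by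
    intro s hs
    have := hqanti (self_mem_Ici) (mem_Ici.mpr hs) hs
    have h2 : Real.exp s * (h' s - ψ1 s) ≤ 0 := le_trans this hq0
    have he : (0:ℝ) < Real.exp s := Real.exp_pos s
    have h3 : Real.exp s * (h' s - ψ1 s) ≤ Real.exp s * 0 := by rw [mul_zero]; exact h2
    have := (mul_le_mul_iff_right₀ he).mp h3
    linarith
  -- integrate: h - ψ nonincreasing on [0,∞)
  have hranti : AntitoneOn (fun u => h u - ψ u) (Ici (0:ℝ)) := by
    apply myAntiOn (convex_Ici 0) (fun s hs => (hd1 s).sub (hψd s (by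
      simp only [mem_Ici] at hs; linarith)))
    intro s hs
    have := hd'le s hs
    linarith
  have hψ0 : ψ 0 = 0 := by
    simp only [hψ_def]
    norm_num
  refine ⟨75*a, fun t ht => ⟨hlow t ht, ?_⟩⟩
  have hr := hranti self_mem_Ici (mem_Ici.mpr ht) ht
  simp only [h0, hψ0] at hr
  -- hr : h t - ψ t ≤ 0 - 0
  have hψle : ψ t ≤ 75*a := by
    simp only [hψ_def]
    have hE : (0:ℝ) ≤ Real.exp (-(t/2)) := (Real.exp_pos _).le
    have hX : (0:ℝ) ≤ (1+t)^(a-1) := Real.rpow_nonneg (by linarith) _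
    nlinarith [mul_nonneg ha0.le hE, mul_nonneg ha0.le hX]
  linarith
end

section
/- Let γ > 1 and let f : [0,∞) → ℝ solve f'' + f' - (1/(3γ-1)) f^{2-3γ} = 0 with f(0) = 1, f'(0) = 1/(3γ-1), and suppose (1+t)^{1/(3γ-1)} ≤ f(t) ≤ K(1+t)^{1/(3γ-1)} for all t ≥ 0 and some K > 0. Then f'(t) ≥ 0 for all t ≥ 0; in fact f'(t) = (1/(3γ-1)) e^{-t} + (1/(3γ-1)) ∫₀^t e^{-(t-s)} f(s)^{2-3γ} ds. -/
open Real MeasureTheory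

/-- Duhamel formula and monotonicity for `f = η̃_r` solving
`f'' + f' - (1/(3γ-1)) f^{2-3γ} = 0` with `f(0)=1`, `f'(0)=1/(3γ-1)`. -/
theorem eta_r_duhamel_and_monotone (γ K : ℝ) (hγ : 1 < γ) (hK : 0 < K)
    (f f' f'' : ℝ → ℝ)
    (hd1 : ∀ t : ℝ, HasDerivAt f (f' t) t)
    (hd2 : ∀ t : ℝ, HasDerivAt f' (f'' t) t)
    (hode : ∀ t ≥ (0 : ℝ), f'' t + f' t - (1 / (3 * γ - 1)) * f t ^ (2 - 3 * γ) = 0)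
    (hf0 : f 0 = 1) (hf'0 : f' 0 = 1 / (3 * γ - 1))
    (hbd : ∀ t ≥ (0 : ℝ), (1 + t) ^ ((1 : ℝ) / (3 * γ - 1)) ≤ f t ∧
      f t ≤ K * (1 + t) ^ ((1 : ℝ) / (3 * γ - 1))) :
    ∀ t ≥ (0 : ℝ),
      f' t = (1 / (3 * γ - 1)) * Real.exp (-t)
          + (1 / (3 * γ - 1)) * ∫ s in (0 : ℝ)..t, Real.exp (-(t - s)) * f s ^ (2 - 3 * γ)
      ∧ 0 ≤ f' t := by
  have h3 : (0:ℝ) < 3*γ - 1 := by linarith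
  have hc : (0:ℝ) < 1/(3*γ-1) := by positivity
  have hcontf : Continuous f := continuous_iff_continuousAt.2 fun x => (hd1 x).continuousAt
  intro t ht
  have hfpos : ∀ s ∈ Set.Icc (0:ℝ) t, 0 < f s := by
    intro s hs
    have h1 : (0:ℝ) < (1+s) ^ ((1:ℝ)/(3*γ-1)) :=
      Real.rpow_pos_of_pos (by linarith [hs.1]) _
    linarith [(hbd s hs.1).1]
  have hcontOn : ContinuousOn (fun s => Real.exp s * ((1/(3*γ-1)) * f s ^ (2-3*γ)))
      (Set.Icc (0:ℝ) t) := by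
    apply Continuous.continuousOn Real.continuous_exp |>.mul
    exact continuousOn_const.mul
      ((hcontf.continuousOn).rpow_const fun s hs => Or.inl (ne_of_gt (hfpos s hs)))
  have key : ∫ s in (0:ℝ)..t, Real.exp s * ((1/(3*γ-1)) * f s ^ (2-3*γ))
      = Real.exp t * f' t - Real.exp 0 * f' 0 := by
    apply intervalIntegral.integral_eq_sub_of_hasDerivAt
    · intro s hs
      rw [Set.uIcc_of_le ht] at hs
      have hds : HasDerivAt (fun u => Real.exp u * f' u)
          (Real.exp s * f'' s + Real.exp s * f' s) s := by
        have : HasDerivAt (fun u => Real.exp u * f' u) (Real.exp s * f' s + Real.exp s * f'' s) s :=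
          (Real.hasDerivAt_exp s).mul (hd2 s)
        convert this using 1
        ring
      have heq : Real.exp s * f'' s + Real.exp s * f' s
          = Real.exp s * ((1/(3*γ-1)) * f s ^ (2-3*γ)) := by
        have h := hode s hs.1
        linear_combination Real.exp s * h
      exact heq ▸ hds
    · apply ContinuousOn.intervalIntegrable
      rwa [Set.uIcc_of_le ht]
  have hexp0 : Real.exp (0:ℝ) = 1 := Real.exp_zero
  have hft : f' t = Real.exp (-t) *
      ((∫ s in (0:ℝ)..t, Real.exp s * ((1/(3*γ-1)) * f s ^ (2-3*γ))) + 1/(3*γ-1)) := by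
    rw [key, hexp0, hf'0, Real.exp_neg]
    field_simp
    ring
  have hint : ∫ s in (0:ℝ)..t, Real.exp (-(t-s)) * f s ^ (2-3*γ)
      = Real.exp (-t) * ∫ s in (0:ℝ)..t, Real.exp s * f s ^ (2-3*γ) := by
    rw [← intervalIntegral.integral_const_mul]
    apply intervalIntegral.integral_congr
    intro s _
    show Real.exp (-(t-s)) * f s ^ (2-3*γ) = Real.exp (-t) * (Real.exp s * f s ^ (2-3*γ))
    rw [show -(t-s) = -t + s by ring, Real.exp_add]
    ring
  have hint2 : ∫ s in (0:ℝ)..t, Real.exp s * ((1/(3*γ-1)) * f s ^ (2-3*γ))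
      = (1/(3*γ-1)) * ∫ s in (0:ℝ)..t, Real.exp s * f s ^ (2-3*γ) := by
    rw [← intervalIntegral.integral_const_mul]
    apply intervalIntegral.integral_congr
    intro s _
    show Real.exp s * ((1/(3*γ-1)) * f s ^ (2-3*γ)) = (1/(3*γ-1)) * (Real.exp s * f s ^ (2-3*γ))
    ring
  have hduh : f' t = (1 / (3 * γ - 1)) * Real.exp (-t)
      + (1 / (3 * γ - 1)) * ∫ s in (0 : ℝ)..t, Real.exp (-(t - s)) * f s ^ (2 - 3 * γ) := by
    rw [hft, hint, hint2]
    ring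
  refine ⟨hduh, ?_⟩
  rw [hduh]
  have hintnn : 0 ≤ ∫ s in (0:ℝ)..t, Real.exp (-(t-s)) * f s ^ (2-3*γ) := by
    apply intervalIntegral.integral_nonneg ht
    intro s hs
    exact mul_nonneg (Real.exp_nonneg _) (Real.rpow_nonneg (le_of_lt (hfpos s hs)) _)
  positivity
end

section
/- Let γ > 1 and let f : [0,∞) → ℝ be continuous with (1+t)^{1/(3γ-1)} ≤ f(t) ≤ K(1+t)^{1/(3γ-1)} for all t ≥ 0. Then there exists C > 0 (depending on γ, K) such that for all t ≥ 0: e^{-t} + ∫₀^t e^{-(t-s)} f(s)^{2-3γ} ds ≤ C (1+t)^{(2-3γ)/(3γ-1)}. -/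
open Real MeasureTheory

/-- Decay estimate for the Duhamel integral: if `(1+t)^{1/(3γ-1)} ≤ f(t) ≤ K(1+t)^{1/(3γ-1)}`,
then `e^{-t} + ∫₀^t e^{-(t-s)} f(s)^{2-3γ} ds ≤ C (1+t)^{(2-3γ)/(3γ-1)}`. -/
theorem duhamel_decay (γ K : ℝ) (hγ : 1 < γ) (hK : 0 < K)
    (f : ℝ → ℝ) (hf : Continuous f)
    (hbd : ∀ t ≥ (0 : ℝ), (1 + t) ^ ((1 : ℝ) / (3 * γ - 1)) ≤ f t ∧
      f t ≤ K * (1 + t) ^ ((1 : ℝ) / (3 * γ - 1))) :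
    ∃ C > 0, ∀ t ≥ (0 : ℝ),
      Real.exp (-t) + (∫ s in (0 : ℝ)..t, Real.exp (-(t - s)) * f s ^ (2 - 3 * γ)) ≤
        C * (1 + t) ^ ((2 - 3 * γ) / (3 * γ - 1)) := by
  have h3γ : (0:ℝ) < 3 * γ - 1 := by linarith
  set α := (2 - 3 * γ) / (3 * γ - 1) with hαdef
  have hα_neg : α ≤ 0 := le_of_lt (div_neg_of_neg_of_pos (by linarith) h3γ)
  have hα_ge : (-1:ℝ) ≤ α := by
    rw [hαdef, le_div_iff₀ h3γ]; nlinarith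
  refine ⟨6, by norm_num, fun t ht => ?_⟩
  have h1t : (1:ℝ) ≤ 1 + t := by linarith
  have hrt : (0:ℝ) ≤ (1+t) ^ α := Real.rpow_nonneg (by linarith) _
  -- exponential beats the polynomial
  have hexp : ∀ u : ℝ, 0 ≤ u → Real.exp (-(u/2)) ≤ 2 * (1+u) ^ α := by
    intro u hu
    have h1u : (1:ℝ) ≤ 1 + u := by linarith
    have he : (1+u)/2 ≤ Real.exp (u/2) := by
      have := Real.add_one_le_exp (u/2); linarith
    have hpos : (0:ℝ) < (1+u)/2 := by linarith
    have h2 : Real.exp (-(u/2)) ≤ 2 * (1+u)⁻¹ := by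
      rw [Real.exp_neg]
      calc (Real.exp (u/2))⁻¹ ≤ ((1+u)/2)⁻¹ := inv_anti₀ hpos he
        _ = 2 * (1+u)⁻¹ := by field_simp
    refine h2.trans ?_
    have hi : (1+u)⁻¹ = (1+u) ^ (-1:ℝ) := (Real.rpow_neg_one _).symm
    rw [hi]
    have := Real.rpow_le_rpow_of_exponent_le h1u hα_ge
    linarith
  have hfpos : ∀ s ∈ Set.Icc (0:ℝ) t, 0 < f s := fun s hs =>
    lt_of_lt_of_le (Real.rpow_pos_of_pos (by linarith [hs.1]) _) (hbd s hs.1).1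
  -- continuity / integrability
  have hcf : ContinuousOn (fun s => Real.exp (-(t-s)) * f s ^ (2 - 3*γ)) (Set.Icc 0 t) :=
    ((Real.continuous_exp.comp (by continuity)).continuousOn).mul
      (hf.continuousOn.rpow_const fun s hs => Or.inl (ne_of_gt (hfpos s hs)))
  have hcg : ContinuousOn (fun s => Real.exp (-(t-s)) * (1+s) ^ α) (Set.Icc 0 t) :=
    ((Real.continuous_exp.comp (by continuity)).continuousOn).mul
      ((continuousOn_const.add continuousOn_id).rpow_const
        fun s hs => Or.inl (ne_of_gt (by show (0:ℝ) < 1 + s; linarith [hs.1])))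
  have ht2 : (0:ℝ) ≤ t/2 := by linarith
  have ht2' : t/2 ≤ t := by linarith
  have hsub1 : Set.uIcc (0:ℝ) (t/2) ⊆ Set.Icc 0 t := by
    rw [Set.uIcc_of_le ht2]; exact Set.Icc_subset_Icc le_rfl ht2'
  have hsub2 : Set.uIcc (t/2) t ⊆ Set.Icc 0 t := by
    rw [Set.uIcc_of_le ht2']; exact Set.Icc_subset_Icc ht2 le_rfl
  have hsub0 : Set.uIcc (0:ℝ) t ⊆ Set.Icc 0 t := by rw [Set.uIcc_of_le ht]
  have hIf : IntervalIntegrable (fun s => Real.exp (-(t-s)) * f s ^ (2 - 3*γ)) volume 0 t :=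
    (hcf.mono hsub0).intervalIntegrable
  have hIg : IntervalIntegrable (fun s => Real.exp (-(t-s)) * (1+s) ^ α) volume 0 t :=
    (hcg.mono hsub0).intervalIntegrable
  have hIg1 : IntervalIntegrable (fun s => Real.exp (-(t-s)) * (1+s) ^ α) volume 0 (t/2) :=
    (hcg.mono hsub1).intervalIntegrable
  have hIg2 : IntervalIntegrable (fun s => Real.exp (-(t-s)) * (1+s) ^ α) volume (t/2) t :=
    (hcg.mono hsub2).intervalIntegrable
  have hcexp : Continuous (fun s : ℝ => Real.exp (-(t-s))) :=
    Real.continuous_exp.comp (by continuity)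
  -- closed form for the exponential integral
  have hcomp : ∀ a b : ℝ, (∫ s in a..b, Real.exp (-(t-s))) =
      Real.exp (b - t) - Real.exp (a - t) := by
    intro a b
    have hfun : (fun s : ℝ => Real.exp (-(t-s))) = fun s => Real.exp (s - t) := by
      funext s; ring_nf
    rw [hfun, intervalIntegral.integral_comp_sub_right (fun u => Real.exp u) t,
      integral_exp]
  -- step 1: replace f by its lower bound
  have step1 : (∫ s in (0:ℝ)..t, Real.exp (-(t-s)) * f s ^ (2 - 3*γ)) ≤
      ∫ s in (0:ℝ)..t, Real.exp (-(t-s)) * (1+s) ^ α := by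
    refine intervalIntegral.integral_mono_on ht hIf hIg fun s hs => ?_
    have h1s : (0:ℝ) < 1 + s := by linarith [hs.1]
    have hb : (1+s) ^ ((1:ℝ)/(3*γ-1)) ≤ f s := (hbd s hs.1).1
    have hlow : (0:ℝ) < (1+s) ^ ((1:ℝ)/(3*γ-1)) := Real.rpow_pos_of_pos h1s _
    have h2 : f s ^ (2 - 3*γ) ≤ ((1+s) ^ ((1:ℝ)/(3*γ-1))) ^ (2 - 3*γ) :=
      Real.rpow_le_rpow_of_nonpos hlow hb (by linarith)
    have h3 : ((1+s) ^ ((1:ℝ)/(3*γ-1))) ^ (2 - 3*γ) = (1+s) ^ α := by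
      rw [← Real.rpow_mul h1s.le]
      congr 1
      rw [hαdef]; field_simp
    exact mul_le_mul_of_nonneg_left (h3 ▸ h2) (Real.exp_pos _).le
  -- split the integral
  have hsplit : (∫ s in (0:ℝ)..t, Real.exp (-(t-s)) * (1+s) ^ α) =
      (∫ s in (0:ℝ)..(t/2), Real.exp (-(t-s)) * (1+s) ^ α) +
      ∫ s in (t/2)..t, Real.exp (-(t-s)) * (1+s) ^ α :=
    (intervalIntegral.integral_add_adjacent_intervals hIg1 hIg2).symm
  -- first piece
  have part1 : (∫ s in (0:ℝ)..(t/2), Real.exp (-(t-s)) * (1+s) ^ α) ≤ 2 * (1+t) ^ α := by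
    have hmono : (∫ s in (0:ℝ)..(t/2), Real.exp (-(t-s)) * (1+s) ^ α) ≤
        ∫ s in (0:ℝ)..(t/2), Real.exp (-(t-s)) := by
      refine intervalIntegral.integral_mono_on ht2 hIg1
        (hcexp.intervalIntegrable _ _) fun s hs => ?_
      have h1s : (1:ℝ) ≤ 1 + s := by linarith [hs.1]
      have hle1 : (1+s) ^ α ≤ 1 := Real.rpow_le_one_of_one_le_of_nonpos h1s hα_neg
      nlinarith [Real.exp_pos (-(t-s)), Real.rpow_nonneg (by linarith : (0:ℝ) ≤ 1+s) α]
    have hcomp1 : (∫ s in (0:ℝ)..(t/2), Real.exp (-(t-s))) ≤ Real.exp (-(t/2)) := by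
      rw [hcomp 0 (t/2)]
      have : t/2 - t = -(t/2) := by ring
      rw [this]
      have := Real.exp_pos (0 - t)
      linarith
    exact hmono.trans (hcomp1.trans (hexp t ht))
  -- second piece
  have hhalfpos : (0:ℝ) < 1 + t/2 := by linarith
  have hhalf : (1 + t/2) ^ α ≤ 2 * (1+t) ^ α := by
    have h1 : (1+t)/2 ≤ 1 + t/2 := by linarith
    have h2 : (1+t/2:ℝ) ^ α ≤ ((1+t)/2) ^ α :=
      Real.rpow_le_rpow_of_nonpos (by linarith) h1 hα_neg
    have h3 : ((1+t)/2:ℝ) ^ α = (1+t) ^ α / 2 ^ α :=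
      Real.div_rpow (by linarith) (by norm_num) α
    have h4 : (1/2:ℝ) ≤ 2 ^ α := by
      have := Real.rpow_le_rpow_of_exponent_le (one_le_two) hα_ge
      rwa [Real.rpow_neg_one, show ((2:ℝ))⁻¹ = 1/2 by norm_num] at this
    have h5 : (1+t) ^ α / 2 ^ α ≤ 2 * (1+t) ^ α := by
      rw [div_le_iff₀ (lt_of_lt_of_le (by norm_num) h4)]
      nlinarith
    linarith [h2.trans_eq h3]
  have part2 : (∫ s in (t/2)..t, Real.exp (-(t-s)) * (1+s) ^ α) ≤ 2 * (1+t) ^ α := by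
    have hmono : (∫ s in (t/2)..t, Real.exp (-(t-s)) * (1+s) ^ α) ≤
        ∫ s in (t/2)..t, Real.exp (-(t-s)) * (1+t/2) ^ α := by
      refine intervalIntegral.integral_mono_on ht2' hIg2
        ((hcexp.mul continuous_const).intervalIntegrable _ _) fun s hs => ?_
      have h2 : (1+s) ^ α ≤ (1+t/2) ^ α :=
        Real.rpow_le_rpow_of_nonpos hhalfpos (by linarith [hs.1]) hα_neg
      exact mul_le_mul_of_nonneg_left h2 (Real.exp_pos _).le
    have hcomp2 : (∫ s in (t/2)..t, Real.exp (-(t-s)) * (1+t/2) ^ α) ≤ (1+t/2) ^ α := by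
      rw [intervalIntegral.integral_mul_const, hcomp (t/2) t]
      have hnn : (0:ℝ) ≤ (1+t/2) ^ α := Real.rpow_nonneg hhalfpos.le _
      have h1 : Real.exp (t - t) - Real.exp (t/2 - t) ≤ 1 := by
        have := Real.exp_pos (t/2 - t)
        simp only [sub_self, Real.exp_zero]
        linarith
      nlinarith [Real.exp_pos (t/2 - t)]
    exact hmono.trans (hcomp2.trans hhalf)
  -- the leading exponential term
  have hexp_t : Real.exp (-t) ≤ 2 * (1+t) ^ α := by
    have : Real.exp (-t) ≤ Real.exp (-(t/2)) := Real.exp_le_exp.2 (by linarith)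
    exact this.trans (hexp t ht)
  calc Real.exp (-t) + (∫ s in (0:ℝ)..t, Real.exp (-(t-s)) * f s ^ (2 - 3*γ)) ≤
      2 * (1+t) ^ α + (2 * (1+t) ^ α + 2 * (1+t) ^ α) := by
        have := step1.trans (le_of_eq hsplit)
        have h := add_le_add part1 part2
        linarith
    _ = 6 * (1+t) ^ α := by ring
end

section
/- Let γ > 1 and suppose h : [0,∞) → [0,∞) is continuous, bounded, and satisfies h(t) ≤ C₀ (1+t)^{-(3γ-2)/(3γ-1)} ∫₀^t ((1+s)^{-2/(3γ-1)} h(s)² + (1+s)^{-1}) ds for all t ≥ 0. Then there exists C (depending on γ, C₀ and the bound on h) such that h(t) ≤ C (1+t)^{-(3γ-2)/(3γ-1)} ln(1+t+e) for all t ≥ 0. -/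
open Real MeasureTheory

private lemma ii_of_contOn {t : ℝ} (ht : 0 ≤ t) {f : ℝ → ℝ}
    (hf : ContinuousOn f (Set.Icc 0 t)) : IntervalIntegrable f volume 0 t := by
  apply ContinuousOn.intervalIntegrable
  rwa [Set.uIcc_of_le ht]

private lemma contOn_shift_rpow (t q : ℝ) :
    ContinuousOn (fun s : ℝ => (1 + s) ^ q) (Set.Icc 0 t) := by
  apply ContinuousOn.rpow_const (by fun_prop)
  intro x hx
  exact Or.inl (ne_of_gt (by linarith [hx.1]))

private lemma contOn_shift_inv (t : ℝ) :
    ContinuousOn (fun s : ℝ => (1 + s)⁻¹) (Set.Icc 0 t) := by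
  apply ContinuousOn.inv₀ (by fun_prop)
  intro x hx
  exact ne_of_gt (by linarith [hx.1])

private lemma int_shift_rpow_le (q t : ℝ) (hq : q < 1) (ht : 0 ≤ t) :
    (∫ s in (0:ℝ)..t, (1 + s) ^ (-q)) ≤ (1 + t) ^ (1 - q) / (1 - q) := by
  have h1 : (∫ s in (0:ℝ)..t, (1 + s) ^ (-q)) = ∫ u in (1:ℝ)..(1+t), u ^ (-q) := by
    simpa using intervalIntegral.integral_comp_add_left (a := 0) (b := t) (fun u : ℝ => u ^ (-q)) 1
  have h2 : (∫ u in (1:ℝ)..(1+t), u ^ (-q)) = ((1+t) ^ (-q+1) - 1 ^ (-q+1)) / (-q+1) :=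
    integral_rpow (Or.inl (by linarith))
  rw [h1, h2, Real.one_rpow]
  have h3 : -q + 1 = 1 - q := by ring
  rw [h3]
  have hpos : (0:ℝ) < 1 - q := by linarith
  gcongr
  linarith

private lemma int_shift_inv (t : ℝ) (ht : 0 ≤ t) :
    (∫ s in (0:ℝ)..t, (1 + s)⁻¹) = Real.log (1 + t) := by
  have h1 : (∫ s in (0:ℝ)..t, (1+s)⁻¹) = ∫ u in (1:ℝ)..(1+t), u⁻¹ := by
    simpa using intervalIntegral.integral_comp_add_left (a := 0) (b := t) (fun u : ℝ => u⁻¹) 1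
  rw [h1, integral_inv (by rw [Set.uIcc_of_le (by linarith : (1:ℝ) ≤ 1+t)]; simp), div_one]

private lemma log_le_two_sqrt (t : ℝ) (ht : 0 ≤ t) :
    Real.log (1 + t) ≤ 2 * (1 + t) ^ ((1:ℝ)/2) := by
  have h0 : (0:ℝ) < 1 + t := by linarith
  have h1 : Real.log (1 + t) = 2 * Real.log ((1+t) ^ ((1:ℝ)/2)) := by
    rw [Real.log_rpow h0]; ring
  have h2 : Real.log ((1+t) ^ ((1:ℝ)/2)) ≤ (1+t) ^ ((1:ℝ)/2) - 1 :=
    Real.log_le_sub_one_of_pos (Real.rpow_pos_of_pos h0 _)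
  linarith

/-- Bootstrap lemma: a bounded nonnegative continuous `h` satisfying the integral
inequality decays like `(1+t)^{-(3γ-2)/(3γ-1)} ln(1+t+e)`. -/
theorem bootstrap_log_decay (γ C₀ : ℝ) (hγ : 1 < γ) (hC₀ : 0 < C₀)
    (h : ℝ → ℝ) (hcont : Continuous h) (hnonneg : ∀ t, 0 ≤ h t)
    (hbdd : ∃ M : ℝ, ∀ t ≥ (0 : ℝ), h t ≤ M)
    (hineq : ∀ t ≥ (0 : ℝ),
      h t ≤ C₀ * (1 + t) ^ (-(3 * γ - 2) / (3 * γ - 1)) *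
        ∫ s in (0 : ℝ)..t, ((1 + s) ^ (-(2 : ℝ) / (3 * γ - 1)) * h s ^ 2 + (1 + s)⁻¹)) :
    ∃ C : ℝ, ∀ t ≥ (0 : ℝ),
      h t ≤ C * (1 + t) ^ (-(3 * γ - 2) / (3 * γ - 1)) * Real.log (1 + t + Real.exp 1) := by
  obtain ⟨M, hM⟩ := hbdd
  have hden : (2:ℝ) < 3*γ - 1 := by linarith
  have hden0 : (0:ℝ) < 3*γ - 1 := by linarith
  set δ : ℝ := 1/(3*γ-1) with hδdef
  set β : ℝ := 2/(3*γ-1) with hβdef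
  have hδ : 0 < δ := by rw [hδdef]; positivity
  have hβ : β = 2*δ := by rw [hβdef, hδdef]; ring
  have hβ1 : β < 1 := by rw [hβdef, div_lt_one hden0]; linarith
  have hα : -(3*γ-2)/(3*γ-1) = -(1 - δ) := by rw [hδdef]; field_simp; ring
  have hβneg : -(2:ℝ)/(3*γ-1) = -β := by rw [hβdef]; ring
  set μs : ℝ := (1-β)/2 with hμsdef
  have hμspos : 0 < μs := by rw [hμsdef]; linarith
  -- One application of the integral inequality given a power-law bound on h
  have est : ∀ (K μ : ℝ), 0 ≤ K → 0 ≤ μ → (∀ t ≥ (0:ℝ), h t ≤ K * (1+t) ^ (-μ)) →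
      ∀ t ≥ (0:ℝ), h t ≤ C₀ * (1+t) ^ (-(1-δ)) *
        ∫ s in (0:ℝ)..t, (K^2 * (1+s) ^ (-(β+2*μ)) + (1+s)⁻¹) := by
    intro K μ hK hμ hKb t ht
    have h1 := hineq t ht
    rw [hα] at h1
    refine h1.trans ?_
    have h1t : (0:ℝ) < 1 + t := by linarith
    apply mul_le_mul_of_nonneg_left ?_ (by positivity)
    apply intervalIntegral.integral_mono_on ht
    · exact ii_of_contOn ht
        (((contOn_shift_rpow t _).mul ((hcont.pow 2).continuousOn)).add (contOn_shift_inv t))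
    · exact ii_of_contOn ht
        ((continuousOn_const.mul (contOn_shift_rpow t _)).add (contOn_shift_inv t))
    · intro s hs
      have hs0 : 0 ≤ s := hs.1
      have h1s : (0:ℝ) < 1 + s := by linarith
      have hb : h s ^ 2 ≤ (K * (1+s) ^ (-μ))^2 :=
        pow_le_pow_left₀ (hnonneg s) (hKb s hs0) 2
      have hr : (1+s) ^ (-β) * (K * (1+s) ^ (-μ))^2 = K^2 * (1+s) ^ (-(β+2*μ)) := by
        have e1 : (1+s) ^ (-(β+2*μ)) = (1+s) ^ (-β) * ((1+s) ^ (-μ) * (1+s) ^ (-μ)) := by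
          rw [← Real.rpow_add h1s, ← Real.rpow_add h1s]
          congr 1; ring
        rw [e1]; ring
      have hkey : (1+s) ^ (-(2:ℝ)/(3*γ-1)) * h s ^ 2 ≤ K^2 * (1+s) ^ (-(β+2*μ)) := by
        rw [hβneg, ← hr]
        exact mul_le_mul_of_nonneg_left hb (by positivity)
      linarith
  -- The improvement step when the exponent is still subcritical
  have step : ∀ (K μ : ℝ), 0 ≤ K → 0 ≤ μ → β + 2*μ < 1 →
      (∀ t ≥ (0:ℝ), h t ≤ K * (1+t) ^ (-μ)) →
      ∃ K', 0 ≤ K' ∧ ∀ t ≥ (0:ℝ), h t ≤ K' * (1+t) ^ (-(min (2*μ+δ) μs)) := by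
    intro K μ hK hμ hlt hKb
    have hq1 : (0:ℝ) < 1 - (β+2*μ) := by linarith
    refine ⟨C₀ * K^2 / (1-(β+2*μ)) + 2*C₀, by positivity, ?_⟩
    intro t ht
    have h1 := est K μ hK hμ hKb t ht
    have h1t : (0:ℝ) < 1 + t := by linarith
    have h1t1 : (1:ℝ) ≤ 1 + t := by linarith
    have hint : (∫ s in (0:ℝ)..t, (K^2 * (1+s) ^ (-(β+2*μ)) + (1+s)⁻¹))
        ≤ K^2 * ((1+t) ^ (1-(β+2*μ)) / (1-(β+2*μ))) + Real.log (1+t) := by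
      rw [intervalIntegral.integral_add
          (ii_of_contOn ht (f := fun s => K^2 * (1+s) ^ (-(β+2*μ))) (continuousOn_const.mul (contOn_shift_rpow t _)))
          (ii_of_contOn ht (contOn_shift_inv t)),
        intervalIntegral.integral_const_mul, int_shift_inv t ht]
      gcongr
      exact int_shift_rpow_le (β+2*μ) t (by linarith) ht
    have hmin1 : min (2*μ+δ) μs ≤ 2*μ+δ := min_le_left _ _
    have hmin2 : min (2*μ+δ) μs ≤ μs := min_le_right _ _
    calc h t ≤ C₀ * (1+t) ^ (-(1-δ)) *
          (K^2 * ((1+t) ^ (1-(β+2*μ)) / (1-(β+2*μ))) + Real.log (1+t)) :=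
        h1.trans (mul_le_mul_of_nonneg_left hint (by positivity))
      _ ≤ C₀ * (1+t) ^ (-(1-δ)) *
          (K^2 * ((1+t) ^ (1-(β+2*μ)) / (1-(β+2*μ))) + 2*(1+t) ^ ((1:ℝ)/2)) := by
        apply mul_le_mul_of_nonneg_left ?_ (by positivity)
        linarith [log_le_two_sqrt t ht]
      _ = C₀*K^2/(1-(β+2*μ)) * ((1+t) ^ (-(1-δ)) * (1+t) ^ (1-(β+2*μ)))
          + 2*C₀ * ((1+t) ^ (-(1-δ)) * (1+t) ^ ((1:ℝ)/2)) := by ring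
      _ = C₀*K^2/(1-(β+2*μ)) * (1+t) ^ (-(2*μ+δ)) + 2*C₀ * (1+t) ^ (-μs) := by
        rw [← Real.rpow_add h1t, ← Real.rpow_add h1t]
        congr 2
        · rw [hβ]; ring
        · rw [hμsdef, hβ]; ring
      _ ≤ C₀*K^2/(1-(β+2*μ)) * (1+t) ^ (-(min (2*μ+δ) μs))
          + 2*C₀ * (1+t) ^ (-(min (2*μ+δ) μs)) := by
        have e1 := Real.rpow_le_rpow_of_exponent_le h1t1 (neg_le_neg hmin1)
        have e2 := Real.rpow_le_rpow_of_exponent_le h1t1 (neg_le_neg hmin2)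
        have c1 : (0:ℝ) ≤ C₀*K^2/(1-(β+2*μ)) := by positivity
        have c2 : (0:ℝ) ≤ 2*C₀ := by positivity
        exact add_le_add (mul_le_mul_of_nonneg_left e1 c1) (mul_le_mul_of_nonneg_left e2 c2)
      _ = (C₀ * K^2 / (1-(β+2*μ)) + 2*C₀) * (1+t) ^ (-(min (2*μ+δ) μs)) := by ring
  -- Iterate the improvement
  have key : ∀ n : ℕ, ∃ K, 0 ≤ K ∧ ∀ t ≥ (0:ℝ), h t ≤ K * (1+t) ^ (-(min ((n:ℝ)*δ) μs)) := by
    intro n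
    induction n with
    | zero =>
      refine ⟨max M 0, le_max_right _ _, fun t ht => ?_⟩
      have hz : min (((0:ℕ):ℝ)*δ) μs = 0 := by
        push_cast; rw [zero_mul]; exact min_eq_left hμspos.le
      rw [hz, neg_zero, Real.rpow_zero, mul_one]
      exact (hM t ht).trans (le_max_left _ _)
    | succ n ih =>
      obtain ⟨K, hK, hKb⟩ := ih
      set μ := min ((n:ℝ)*δ) μs with hμdef
      have hμ0 : 0 ≤ μ := le_min (mul_nonneg (Nat.cast_nonneg n) hδ.le) hμspos.le
      by_cases hc : β + 2*μ < 1
      · obtain ⟨K', hK', hK'b⟩ := step K μ hK hμ0 hc hKb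
        refine ⟨K', hK', fun t ht => (hK'b t ht).trans ?_⟩
        apply mul_le_mul_of_nonneg_left ?_ hK'
        apply Real.rpow_le_rpow_of_exponent_le (by linarith)
        apply neg_le_neg
        refine le_min ?_ (min_le_right _ _)
        push_cast
        have hmu : (n:ℝ)*δ ≤ μ ∨ μs ≤ μ := by
          rcases le_total ((n:ℝ)*δ) μs with hcase | hcase
          · left; rw [hμdef, min_eq_left hcase]
          · right; rw [hμdef, min_eq_right hcase]
        rcases hmu with hmu | hmu
        · have hn0 : 0 ≤ (n:ℝ)*δ := mul_nonneg (Nat.cast_nonneg n) hδ.le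
          linarith [min_le_left (((n:ℝ)+1)*δ) μs]
        · linarith [min_le_right (((n:ℝ)+1)*δ) μs]
      · push_neg at hc
        have hμsμ : μs ≤ μ := by rw [hμsdef]; linarith
        refine ⟨K, hK, fun t ht => (hKb t ht).trans ?_⟩
        apply mul_le_mul_of_nonneg_left ?_ hK
        apply Real.rpow_le_rpow_of_exponent_le (by linarith)
        exact neg_le_neg (le_trans (min_le_right _ _) hμsμ)
  -- Conclusion: reach the critical exponent and apply the inequality once more
  obtain ⟨N, hN⟩ := exists_nat_ge (μs/δ)
  obtain ⟨K, hK, hKb⟩ := key N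
  have hNμ : min ((N:ℝ)*δ) μs = μs := min_eq_right (by
    rw [div_le_iff₀ hδ] at hN; linarith)
  rw [hNμ] at hKb
  have h1 := est K μs hK hμspos.le hKb
  refine ⟨C₀ * (K^2+1), fun t ht => ?_⟩
  have h1t : (0:ℝ) < 1+t := by linarith
  have hbq : β + 2*μs = 1 := by rw [hμsdef]; ring
  have hintEq : (∫ s in (0:ℝ)..t, (K^2*(1+s) ^ (-(β+2*μs)) + (1+s)⁻¹))
      = (K^2+1) * Real.log (1+t) := by
    have hpt : ∀ s : ℝ, K^2*(1+s) ^ (-(β+2*μs)) + (1+s)⁻¹ = (K^2+1) * (1+s)⁻¹ := by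
      intro s
      rw [hbq, show ((-1:ℝ)) = ((-1:ℤ):ℝ) by norm_num, Real.rpow_intCast, zpow_neg_one]
      ring
    simp_rw [hpt]
    rw [intervalIntegral.integral_const_mul, int_shift_inv t ht]
  have h2 := h1 t ht
  rw [hintEq] at h2
  rw [hα]
  refine h2.trans ?_
  have hlog : Real.log (1+t) ≤ Real.log (1+t+Real.exp 1) := by
    apply Real.log_le_log h1t
    linarith [Real.exp_pos 1]
  calc C₀ * (1+t) ^ (-(1-δ)) * ((K^2+1) * Real.log (1+t))
      = C₀*(K^2+1) * (1+t) ^ (-(1-δ)) * Real.log (1+t) := by ring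
    _ ≤ C₀*(K^2+1) * (1+t) ^ (-(1-δ)) * Real.log (1+t+Real.exp 1) :=
        mul_le_mul_of_nonneg_left hlog (by positivity)
end
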